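/- Let n ≥ 1 be an integer, m ∈ (0,1) with m > (n−2)/n, and B > 0. Then the Barenblatt solution ρ_B satisfies the fast diffusion equation: for every τ with 1+2pτ > 0 and every y ∈ ℝⁿ, ∂_τ ρ_B(τ,y) = (1/m)·Δ_y(ρ_B(τ,y)ᵐ). -/

import Mathlib

open MeasureTheory Filter
open scoped BigOperators ENNReal Topology

noncomputable section

/-- The `i`-th standard basis vector of `ℝⁿ`. -/
def stdBasis (n : ℕ) (i : Fin n) : EuclideanSpace ℝ (Fin n) :=
  EuclideanSpace.single i 1

/-- The Laplacian (sum of second partial derivatives) of `f : ℝⁿ → ℝ`. -/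
def lap (n : ℕ) (f : EuclideanSpace ℝ (Fin n) → ℝ) (x : EuclideanSpace ℝ (Fin n)) : ℝ :=
  ∑ i : Fin n, fderiv ℝ (fun y => fderiv ℝ f y (stdBasis n i)) x (stdBasis n i)

/-- `x · ∇f x`. -/
def gradDot (n : ℕ) (f : EuclideanSpace ℝ (Fin n) → ℝ) (x : EuclideanSpace ℝ (Fin n)) : ℝ :=
  ∑ i : Fin n, x i * fderiv ℝ f x (stdBasis n i)

/-- The moment parameter `p = 2/(1-m) - n`. -/
def pPar (n : ℕ) (m : ℝ) : ℝ := 2 / (1 - m) - n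

/-- The scaling exponent `β = (1 + n/p)/2`. -/
def betaPar (n : ℕ) (m : ℝ) : ℝ := (1 + n / pPar n m) / 2

/-- The Barenblatt profile `u_B(x) = (B + |x|²)^{-1/(1-m)}`. -/
def uB (n : ℕ) (m B : ℝ) (x : EuclideanSpace ℝ (Fin n)) : ℝ :=
  (B + ‖x‖ ^ 2) ^ (-(1 / (1 - m)))

/-- The Barenblatt solution `ρ_B(τ,y) = (1+2pτ)^{-nβ} u_B((1+2pτ)^{-β} y)`. -/
def rhoB (n : ℕ) (m B : ℝ) (τ : ℝ) (y : EuclideanSpace ℝ (Fin n)) : ℝ :=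
  (1 + 2 * pPar n m * τ) ^ (-(n : ℝ) * betaPar n m) *
    uB n m B ((1 + 2 * pPar n m * τ) ^ (-betaPar n m) • y)

/-- A (positive, continuous up to time 0, smooth for positive times) solution of the
fast diffusion equation `∂_τ ρ = (1/m) Δ (ρ^m)` on `[0,∞) × ℝⁿ`. -/
def IsFDESol (n : ℕ) (m : ℝ) (ρ : ℝ → EuclideanSpace ℝ (Fin n) → ℝ) : Prop :=
  (∀ τ ∈ Set.Ici (0 : ℝ), ∀ y, 0 < ρ τ y) ∧
  ContinuousOn (fun q : ℝ × EuclideanSpace ℝ (Fin n) => ρ q.1 q.2)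
    (Set.Ici 0 ×ˢ Set.univ) ∧
  ContDiffOn ℝ (⊤ : ℕ∞) (fun q : ℝ × EuclideanSpace ℝ (Fin n) => ρ q.1 q.2)
    (Set.Ioi 0 ×ˢ Set.univ) ∧
  ∀ τ ∈ Set.Ioi (0 : ℝ), ∀ y,
    deriv (fun s => ρ s y) τ = (1 / m) * lap n (fun x => ρ τ x ^ m) y

/-! ### Auxiliary lemmas -/

abbrev Esp (n : ℕ) := EuclideanSpace ℝ (Fin n)

def Lx (n : ℕ) (x : Esp n) : Esp n →L[ℝ] ℝ :=
  ∑ i, (2 * x i) • (EuclideanSpace.proj i : Esp n →L[ℝ] ℝ)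

lemma hasFDerivAt_S (n : ℕ) (x : Esp n) :
    HasFDerivAt (fun z : Esp n => ∑ i, z i ^ 2) (Lx n x) x := by
  have : ∀ i : Fin n, HasFDerivAt (fun z : Esp n => z i ^ 2)
      ((2 * x i) • (EuclideanSpace.proj i : Esp n →L[ℝ] ℝ)) x := by
    intro i
    have h := ((EuclideanSpace.proj i : Esp n →L[ℝ] ℝ).hasFDerivAt (x := x)).mul
      ((EuclideanSpace.proj i : Esp n →L[ℝ] ℝ).hasFDerivAt (x := x))
    have h2 : HasFDerivAt (fun z : Esp n => z i * z i)
        (x i • (EuclideanSpace.proj i : Esp n →L[ℝ] ℝ) + x i • (EuclideanSpace.proj i : Esp n →L[ℝ] ℝ)) x := h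
    have : (2 * x i) • (EuclideanSpace.proj i : Esp n →L[ℝ] ℝ)
        = x i • (EuclideanSpace.proj i : Esp n →L[ℝ] ℝ) + x i • (EuclideanSpace.proj i : Esp n →L[ℝ] ℝ) := by
      rw [← add_smul]; ring_nf
    rw [this]
    simpa [sq] using h2
  simpa [Lx] using HasFDerivAt.fun_sum (fun i _ => this i)

lemma Lx_std (n : ℕ) (x : Esp n) (i : Fin n) :
    Lx n x (stdBasis n i) = 2 * x i := by
  simp [Lx, stdBasis, ContinuousLinearMap.sum_apply, EuclideanSpace.single_apply]

lemma single_proj (n : ℕ) (i : Fin n) :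
    (EuclideanSpace.proj i : Esp n →L[ℝ] ℝ) (stdBasis n i) = 1 := by
  simp [stdBasis, EuclideanSpace.single_apply]

lemma norm_sq_eq_sum (n : ℕ) (x : Esp n) : ‖x‖ ^ 2 = ∑ i, x i ^ 2 := by
  rw [EuclideanSpace.norm_eq, Real.sq_sqrt (by positivity)]
  simp [sq_abs]

lemma hasFDerivAt_radial (n : ℕ) (B K a : ℝ) (x : Esp n) (h : 0 < B + K * ∑ i, x i ^ 2) :
    HasFDerivAt (fun z : Esp n => (B + K * ∑ i, z i ^ 2) ^ a)
      ((a * (B + K * ∑ i, x i ^ 2) ^ (a - 1) * K) • Lx n x) x := by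
  have h1 : HasDerivAt (fun t : ℝ => (B + K * t) ^ a)
      (a * (B + K * ∑ i, x i ^ 2) ^ (a - 1) * K) (∑ i, x i ^ 2) := by
    have hin : HasDerivAt (fun t : ℝ => B + K * t) K (∑ i, x i ^ 2) := by
      simpa using ((hasDerivAt_id _).const_mul K).const_add B
    have hout := Real.hasDerivAt_rpow_const (x := B + K * ∑ i, x i ^ 2) (p := a) (Or.inl h.ne')
    have := HasDerivAt.comp (∑ i, x i ^ 2) hout hin
    simpa [Function.comp_def, mul_comm, mul_assoc, mul_left_comm] using this
  simpa [Function.comp_def] using h1.comp_hasFDerivAt x (hasFDerivAt_S n x)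

lemma fderiv_radial_apply (n : ℕ) (C B K a : ℝ) (hB : 0 < B) (hK : 0 ≤ K) (x : Esp n) (i : Fin n) :
    fderiv ℝ (fun z : Esp n => C * (B + K * ∑ j, z j ^ 2) ^ a) x (stdBasis n i)
      = (C * a * K * 2) * ((B + K * ∑ j, x j ^ 2) ^ (a - 1) * x i) := by
  have hpos : 0 < B + K * ∑ j, x j ^ 2 := by positivity
  have h := ((hasFDerivAt_radial n B K a x hpos).const_mul C).fderiv
  rw [h]
  simp only [ContinuousLinearMap.smul_apply, Lx_std, smul_eq_mul]
  ring

lemma lap_radial (n : ℕ) (C B K a : ℝ) (hB : 0 < B) (hK : 0 ≤ K) (y : Esp n) :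
    lap n (fun z : Esp n => C * (B + K * ∑ j, z j ^ 2) ^ a) y
      = C * (4*a*(a-1)*K^2*(B + K * ∑ j, y j ^ 2)^(a-2)*(∑ j, y j ^ 2)
          + 2*a*K*n*(B + K * ∑ j, y j ^ 2)^(a-1)) := by
  have hpos : 0 < B + K * ∑ j, y j ^ 2 := by positivity
  have key : ∀ i : Fin n,
      fderiv ℝ (fun x => fderiv ℝ (fun z : Esp n => C * (B + K * ∑ j, z j ^ 2) ^ a) x (stdBasis n i)) y (stdBasis n i)
      = (C * a * K * 2) * ((B + K * ∑ j, y j ^ 2) ^ (a-1) * 1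
          + y i * ((a-1) * (B + K * ∑ j, y j ^ 2) ^ (a-1-1) * K * (2 * y i))) := by
    intro i
    have hfe : (fun x => fderiv ℝ (fun z : Esp n => C * (B + K * ∑ j, z j ^ 2) ^ a) x (stdBasis n i))
        = fun x : Esp n => (C * a * K * 2) * ((B + K * ∑ j, x j ^ 2) ^ (a - 1) * x i) := by
      funext x; exact fderiv_radial_apply n C B K a hB hK x i
    rw [hfe]
    have hr := hasFDerivAt_radial n B K (a-1) y hpos
    have hp : HasFDerivAt (fun z : Esp n => z i) (EuclideanSpace.proj i : Esp n →L[ℝ] ℝ) y :=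
      (EuclideanSpace.proj i : Esp n →L[ℝ] ℝ).hasFDerivAt
    have hmul := (hr.mul hp).const_mul (C * a * K * 2)
    rw [(show HasFDerivAt (fun x : Esp n => (C * a * K * 2) * ((B + K * ∑ j, x j ^ 2) ^ (a - 1) * x i)) _ y from hmul).fderiv]
    simp only [ContinuousLinearMap.smul_apply, ContinuousLinearMap.add_apply,
      ContinuousLinearMap.coe_smul', Pi.smul_apply, Lx_std, single_proj, smul_eq_mul]
    try ring
  rw [lap]
  have h2 : a - 1 - 1 = a - 2 := by ring
  calc (∑ i : Fin n, fderiv ℝ (fun x => fderiv ℝ (fun z : Esp n => C * (B + K * ∑ j, z j ^ 2) ^ a) x (stdBasis n i)) y (stdBasis n i))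
      = ∑ i : Fin n, ((C*a*K*2*(B + K * ∑ j, y j ^ 2)^(a-1))
          + (C*a*K*2*((a-1)*(B + K * ∑ j, y j ^ 2)^(a-2)*K*2)) * y i ^ 2) := by
        refine Finset.sum_congr rfl fun i _ => ?_
        rw [key i, h2]; ring
    _ = _ := by
        rw [Finset.sum_add_distrib, Finset.sum_const, ← Finset.mul_sum, Finset.card_univ,
          Fintype.card_fin, nsmul_eq_mul]
        ring

/-- **The Barenblatt solution solves the fast diffusion equation** -/
theorem statement16
    (n : ℕ) (hn : 1 ≤ n) (m : ℝ) (hm0 : 0 < m) (hm1 : m < 1)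
    (hm : ((n : ℝ) - 2) / n < m) (B : ℝ) (hB : 0 < B)
    (τ : ℝ) (hτ : 0 < 1 + 2 * pPar n m * τ) (y : EuclideanSpace ℝ (Fin n)) :
    deriv (fun s => rhoB n m B s y) τ =
      (1 / m) * lap n (fun x => rhoB n m B τ x ^ m) y := by
  have h1m : 0 < 1 - m := by linarith
  have hn0 : (0:ℝ) < n := by exact_mod_cast Nat.pos_of_ne_zero (by omega)
  set p : ℝ := pPar n m with hpdef
  set β : ℝ := betaPar n m with hβdef
  have hp : 0 < p := by
    have h2 : (n:ℝ) - 2 < m * n := (div_lt_iff₀ hn0).mp hm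
    rw [hpdef, pPar, sub_pos, lt_div_iff₀ h1m]
    nlinarith
  have hpn2 : (p + n) * (1 - m) = 2 := by
    rw [hpdef, pPar]; field_simp; ring
  have key : p * β * (1 - m) = 1 := by
    rw [hβdef, betaPar, ← hpdef]
    field_simp
    linear_combination hpn2
  set s : ℝ := 1 + 2 * p * τ with hsdef
  have hs : 0 < s := hτ
  set c : ℝ := -(1 / (1 - m)) with hcdef
  set Y : ℝ := ∑ j, y j ^ 2 with hYdef
  set K : ℝ := s ^ (-(2*β)) with hKdef
  have hK : 0 < K := Real.rpow_pos_of_pos hs _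
  -- spatial identification
  have hfun : (fun x : Esp n => rhoB n m B τ x ^ m)
      = fun z : Esp n => (s ^ ((-(n:ℝ)*β)*m)) * (B + K * ∑ j, z j ^ 2) ^ (c*m) := by
    funext x
    have hk : (0:ℝ) < s ^ (-β) := Real.rpow_pos_of_pos hs _
    have hnrm : ‖(s ^ (-β) : ℝ) • x‖ ^ 2 = K * ∑ j, x j ^ 2 := by
      rw [norm_smul, mul_pow, Real.norm_eq_abs, sq_abs, norm_sq_eq_sum]
      congr 1
      rw [hKdef, sq, ← Real.rpow_add hs]
      ring_nf
    have hV : 0 < B + K * ∑ j, x j ^ 2 := by positivity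
    rw [rhoB, uB, ← hpdef, ← hβdef, ← hsdef, hnrm, ← hcdef,
      Real.mul_rpow (Real.rpow_pos_of_pos hs _).le (Real.rpow_pos_of_pos hV _).le,
      ← Real.rpow_mul hs.le, ← Real.rpow_mul hV.le]
  set U : ℝ := B + K * Y with hUdef
  have hY : 0 ≤ Y := Finset.sum_nonneg fun _ _ => sq_nonneg _
  have hU : 0 < U := by
    have := mul_nonneg hK.le hY
    rw [hUdef]; linarith
  -- time derivative
  have hh : HasDerivAt (fun σ : ℝ => 1 + 2*p*σ) (2*p) τ := by
    simpa using ((hasDerivAt_id τ).const_mul (2*p)).const_add 1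
  have hA : HasDerivAt (fun σ : ℝ => (1 + 2*p*σ) ^ (-(n:ℝ)*β))
      ((2*p) * (-(n:ℝ)*β) * s ^ ((-(n:ℝ)*β)-1)) τ := by
    have := hh.rpow_const (p := -(n:ℝ)*β) (Or.inl (by rw [← hsdef]; exact hs.ne'))
    simpa [← hsdef] using this
  have hX : HasDerivAt (fun σ : ℝ => B + (1 + 2*p*σ) ^ (-(2*β)) * Y)
      (((2*p) * (-(2*β)) * s ^ ((-(2*β))-1)) * Y) τ := by
    have h2 := hh.rpow_const (p := -(2*β)) (Or.inl (by rw [← hsdef]; exact hs.ne'))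
    have h3 := (h2.mul_const Y).const_add B
    simpa [← hsdef] using h3
  have hUd : HasDerivAt (fun σ : ℝ => (B + (1 + 2*p*σ) ^ (-(2*β)) * Y) ^ c)
      ((((2*p) * (-(2*β)) * s ^ ((-(2*β))-1)) * Y) * c * U ^ (c-1)) τ := by
    have := hX.rpow_const (p := c) (Or.inl (by
      show B + s ^ (-(2*β)) * Y ≠ 0
      rw [← hKdef, ← hUdef]; exact hU.ne'))
    simpa [← hsdef, ← hKdef, ← hUdef] using this
  have hF : HasDerivAt (fun σ : ℝ => (1 + 2*p*σ) ^ (-(n:ℝ)*β) * (B + (1 + 2*p*σ) ^ (-(2*β)) * Y) ^ c)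
      (((2*p) * (-(n:ℝ)*β) * s ^ ((-(n:ℝ)*β)-1)) * U ^ c
        + s ^ (-(n:ℝ)*β) * ((((2*p) * (-(2*β)) * s ^ ((-(2*β))-1)) * Y) * c * U ^ (c-1))) τ := by
    have := hA.mul hUd
    simpa [← hsdef, ← hKdef, ← hUdef, Pi.mul_def] using this
  have heq : (fun σ => rhoB n m B σ y) =ᶠ[𝓝 τ]
      (fun σ : ℝ => (1 + 2*p*σ) ^ (-(n:ℝ)*β) * (B + (1 + 2*p*σ) ^ (-(2*β)) * Y) ^ c) := by
    have hcont : Continuous fun σ : ℝ => 1 + 2*p*σ := by continuity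
    filter_upwards [(hcont.tendsto τ).eventually (eventually_gt_nhds hs)] with σ hσ
    have hnrm : ‖((1 + 2*p*σ) ^ (-β) : ℝ) • y‖ ^ 2 = (1 + 2*p*σ) ^ (-(2*β)) * Y := by
      rw [norm_smul, mul_pow, Real.norm_eq_abs, sq_abs, norm_sq_eq_sum, ← hYdef]
      congr 1
      rw [sq, ← Real.rpow_add hσ]
      ring_nf
    rw [rhoB, uB, ← hpdef, ← hβdef, hnrm, ← hcdef]
  have hLHS : deriv (fun σ => rhoB n m B σ y) τ
      = ((2*p) * (-(n:ℝ)*β) * s ^ ((-(n:ℝ)*β)-1)) * U ^ c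
        + s ^ (-(n:ℝ)*β) * ((((2*p) * (-(2*β)) * s ^ ((-(2*β))-1)) * Y) * c * U ^ (c-1)) :=
    (hF.congr_of_eventuallyEq heq).deriv
  -- scalar identities
  have hc1 : c * (1 - m) = -1 := by rw [hcdef]; field_simp
  have hpc : p * β = 1 / (1 - m) := by rw [eq_div_iff h1m.ne']; exact key
  have hc2 : c = -(p * β) := by rw [hcdef, hpc]
  have hcm : c * m - 1 = c := by linear_combination -hc1
  have hβn : (n:ℝ) * β * (1 - m) = 2 * β - 1 := by linear_combination β * hpn2 - key
  have R1 : s ^ ((-(n:ℝ)*β)-1) = s ^ ((-(n:ℝ)*β)*m) * K := by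
    rw [hKdef, ← Real.rpow_add hs]
    congr 1
    linear_combination -hβn
  have R2 : s ^ (-(n:ℝ)*β) * s ^ ((-(2*β))-1) = s ^ ((-(n:ℝ)*β)*m) * K^2 := by
    rw [hKdef, ← Real.rpow_add hs, sq, ← Real.rpow_add hs, ← Real.rpow_add hs]
    congr 1
    linear_combination -hβn
  have f4 : U ^ (c*m - 1) = U ^ c := by rw [hcm]
  have f5 : U ^ (c*m - 2) = U ^ (c - 1) := by
    congr 1
    linear_combination hcm
  clear_value U K Y c s β p
  rw [hLHS, hfun, lap_radial n (s ^ ((-(n:ℝ)*β)*m)) B K (c*m) hB hK.le y, ← hYdef, ← hUdef,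
    f4, f5, one_div_mul_eq_div, eq_div_iff hm0.ne']
  linear_combination (2*p*(-(n:ℝ)*β)*U^c*m) * R1
    + (2*p*(-(2*β))*Y*c*U^(c-1)*m) * R2
    - (2*(n:ℝ)*m*(s ^ ((-(n:ℝ)*β)*m))*K*U^c) * hc2
    - (4*c*m*(s ^ ((-(n:ℝ)*β)*m))*K^2*Y*U^(c-1)) * hcm
    - (4*c*m*(s ^ ((-(n:ℝ)*β)*m))*K^2*Y*U^(c-1)) * hc2
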